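/- For all Γ ∪ {α, β} ⊆ Fm: (1) if α ⊢_¬ β then ¬α ⊬_¬ β; (2) α ⊢_¬ β if and only if ¬β ⊢_¬ ¬α; (3) if Γ ∪ {α} ⊢_¬ β and Γ ∪ {¬α} ⊢_¬ β, then Γ ⊢_¬ β. -/
import Mathlib


/-- Formulas of the algebraic language with a single unary connective ¬,
built as the absolutely free algebra over a countably infinite set of variables. -/
inductive Fm : Type where
  | var : ℕ → Fm
  | neg : Fm → Fm

/-- `negn n α` is ¬ⁿα: ¬⁰α = α and ¬ⁿα = ¬(¬ⁿ⁻¹α). -/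
def negn : ℕ → Fm → Fm
  | 0, α => α
  | n + 1, α => Fm.neg (negn n α)

/-- The consequence relation ⊢_¬ of the Hilbert-style calculus with rules
(R1) x, ¬x ⊢ y, (R2) x ⊢ ¬¬x, (R3) ¬¬x ⊢ x: `Deriv Γ α` iff α has a finite
proof from Γ using substitution instances of these rules. -/
inductive Deriv : Set Fm → Fm → Prop where
  | mem {Γ : Set Fm} {α : Fm} : α ∈ Γ → Deriv Γ α
  | r1 {Γ : Set Fm} {α β : Fm} : Deriv Γ α → Deriv Γ (Fm.neg α) → Deriv Γ β
  | r2 {Γ : Set Fm} {α : Fm} : Deriv Γ α → Deriv Γ (Fm.neg (Fm.neg α))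
  | r3 {Γ : Set Fm} {α : Fm} : Deriv Γ (Fm.neg (Fm.neg α)) → Deriv Γ α

/-- The variable at the core of a formula. -/
def idx : Fm → ℕ
  | .var n => n
  | .neg φ => idx φ

/-- The number of negations of a formula. -/
def cnt : Fm → ℕ
  | .var _ => 0
  | .neg φ => cnt φ + 1

lemma decomp (φ : Fm) : φ = negn (cnt φ) (Fm.var (idx φ)) := by
  induction φ with
  | var n => rfl
  | neg φ ih =>
      show Fm.neg φ = Fm.neg (negn (cnt φ) (Fm.var (idx φ)))
      exact congrArg Fm.neg ih

lemma negn_add (a b : ℕ) (φ : Fm) : negn (a + b) φ = negn a (negn b φ) := by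
  induction a with
  | zero => simp [negn]
  | succ a ih =>
      have h : a + 1 + b = (a + b) + 1 := by omega
      rw [h]
      show Fm.neg (negn (a + b) φ) = Fm.neg (negn a (negn b φ))
      exact congrArg Fm.neg ih

lemma cut {Γ Δ : Set Fm} {ψ : Fm} (h : Deriv Δ ψ) (hs : ∀ γ ∈ Δ, Deriv Γ γ) :
    Deriv Γ ψ := by
  induction h with
  | mem hm => exact hs _ hm
  | r1 _ _ ih1 ih2 => exact Deriv.r1 ih1 ih2
  | r2 _ ih => exact Deriv.r2 ih
  | r3 _ ih => exact Deriv.r3 ih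

lemma up (j : ℕ) (φ : Fm) : Deriv {φ} (negn (2 * j) φ) := by
  induction j with
  | zero => exact Deriv.mem rfl
  | succ j ih =>
      have h : 2 * (j + 1) = (2 * j) + 1 + 1 := by omega
      rw [h]
      exact Deriv.r2 ih

lemma down (j : ℕ) (φ : Fm) : Deriv {negn (2 * j) φ} φ := by
  induction j with
  | zero => exact Deriv.mem rfl
  | succ j ih =>
      have h1 : Deriv {negn (2 * (j + 1)) φ} (negn (2 * j) φ) := by
        have h : 2 * (j + 1) = (2 * j) + 1 + 1 := by omega
        rw [h]
        exact Deriv.r3 (Deriv.mem rfl)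
      exact cut ih (fun γ hγ => by
        rw [Set.mem_singleton_iff] at hγ; subst hγ; exact h1)

lemma reach {φ ψ : Fm} (h1 : idx φ = idx ψ) (h2 : cnt φ % 2 = cnt ψ % 2) :
    Deriv {φ} ψ := by
  rcases le_total (cnt φ) (cnt ψ) with h | h
  · obtain ⟨j, hj⟩ : ∃ j, cnt ψ = 2 * j + cnt φ := ⟨(cnt ψ - cnt φ) / 2, by omega⟩
    have hψ : ψ = negn (2 * j) φ := by
      conv_lhs => rw [decomp ψ]
      rw [hj, negn_add, ← h1, ← decomp φ]
    rw [hψ]; exact up j φ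
  · obtain ⟨j, hj⟩ : ∃ j, cnt φ = 2 * j + cnt ψ := ⟨(cnt φ - cnt ψ) / 2, by omega⟩
    have hφ : φ = negn (2 * j) ψ := by
      conv_lhs => rw [decomp φ]
      rw [hj, negn_add, h1, ← decomp ψ]
    rw [hφ]; exact down j ψ

/-- Complete characterization of derivability. -/
lemma char {Γ : Set Fm} {β : Fm} :
    Deriv Γ β ↔ (∃ γ ∈ Γ, idx γ = idx β ∧ cnt γ % 2 = cnt β % 2) ∨
      (∃ γ ∈ Γ, ∃ δ ∈ Γ, idx γ = idx δ ∧ cnt γ % 2 ≠ cnt δ % 2) := by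
  constructor
  · intro h
    induction h with
    | mem hm => exact Or.inl ⟨_, hm, rfl, rfl⟩
    | @r1 α' β' _ _ ih1 ih2 =>
        rcases ih1 with ⟨γ, hγ, e1, e2⟩ | bad
        · rcases ih2 with ⟨δ, hδ, f1, f2⟩ | bad
          · refine Or.inr ⟨γ, hγ, δ, hδ, ?_, ?_⟩
            · rw [e1, f1]; rfl
            · rw [e2, f2]; show cnt α' % 2 ≠ (cnt α' + 1) % 2; omega
          · exact Or.inr bad
        · exact Or.inr bad
    | @r2 α' _ ih =>
        rcases ih with ⟨γ, hγ, e1, e2⟩ | bad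
        · refine Or.inl ⟨γ, hγ, e1, ?_⟩
          rw [e2]; show cnt α' % 2 = (cnt α' + 1 + 1) % 2; omega
        · exact Or.inr bad
    | @r3 α' _ ih =>
        rcases ih with ⟨γ, hγ, e1, e2⟩ | bad
        · refine Or.inl ⟨γ, hγ, e1, ?_⟩
          rw [e2]; show (cnt α' + 1 + 1) % 2 = cnt α' % 2; omega
        · exact Or.inr bad
  · rintro (⟨γ, hγ, e1, e2⟩ | ⟨γ, hγ, δ, hδ, e1, e2⟩)
    · exact cut (reach e1 e2) (fun x hx => by
        rw [Set.mem_singleton_iff] at hx; subst hx; exact Deriv.mem hγ)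
    · have hd : Deriv Γ (Fm.neg γ) := by
        have : Deriv {δ} (Fm.neg γ) := by
          apply reach
          · exact e1.symm
          · show cnt δ % 2 = (cnt γ + 1) % 2; omega
        exact cut this (fun x hx => by
          rw [Set.mem_singleton_iff] at hx; subst hx; exact Deriv.mem hδ)
      exact Deriv.r1 (Deriv.mem hγ) hd

lemma singleton_char {α β : Fm} :
    Deriv {α} β ↔ (idx α = idx β ∧ cnt α % 2 = cnt β % 2) := by
  rw [char]
  constructor
  · rintro (⟨γ, hγ, e⟩ | ⟨γ, hγ, δ, hδ, e1, e2⟩)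
    · rw [Set.mem_singleton_iff] at hγ; subst hγ; exact e
    · rw [Set.mem_singleton_iff] at hγ hδ; subst hγ; subst hδ; omega
  · intro e
    exact Or.inl ⟨α, rfl, e⟩

/-- (1) if α ⊢_¬ β then ¬α ⊬_¬ β; (2) α ⊢_¬ β iff ¬β ⊢_¬ ¬α;
(3) if Γ, α ⊢_¬ β and Γ, ¬α ⊢_¬ β then Γ ⊢_¬ β. -/
theorem stmt3 (Γ : Set Fm) (α β : Fm) :
    (Deriv {α} β → ¬ Deriv {Fm.neg α} β) ∧
    (Deriv {α} β ↔ Deriv {Fm.neg β} (Fm.neg α)) ∧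
    (Deriv (Γ ∪ {α}) β → Deriv (Γ ∪ {Fm.neg α}) β → Deriv Γ β) := by
  refine ⟨?_, ?_, ?_⟩
  · intro h1 h2
    rw [singleton_char] at h1 h2
    have : cnt (Fm.neg α) = cnt α + 1 := rfl
    omega
  · rw [singleton_char, singleton_char]
    have h1 : cnt (Fm.neg α) = cnt α + 1 := rfl
    have h2 : cnt (Fm.neg β) = cnt β + 1 := rfl
    have h3 : idx (Fm.neg α) = idx α := rfl
    have h4 : idx (Fm.neg β) = idx β := rfl
    constructor
    · rintro ⟨e1, e2⟩; simp only [idx, cnt]; exact ⟨e1.symm, by omega⟩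
    · rintro ⟨e1, e2⟩; simp only [idx, cnt] at e1 e2; exact ⟨e1.symm, by omega⟩
  · intro h1 h2
    rw [char] at h1 h2 ⊢
    have hc : cnt (Fm.neg α) = cnt α + 1 := rfl
    have hi : idx (Fm.neg α) = idx α := rfl
    rcases h1 with ⟨γ, hγ, e⟩ | ⟨γ, hγ, δ, hδ, e1, e2⟩
    · rw [Set.mem_union, Set.mem_singleton_iff] at hγ
      rcases hγ with hγ | rfl
      · exact Or.inl ⟨γ, hγ, e⟩
      · -- e : idx α = idx β ∧ cnt α % 2 = cnt β % 2
        rcases h2 with ⟨δ, hδ, f⟩ | ⟨γ', hγ', δ', hδ', f1, f2⟩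
        · rw [Set.mem_union, Set.mem_singleton_iff] at hδ
          rcases hδ with hδ | rfl
          · exact Or.inl ⟨δ, hδ, f⟩
          · rw [hi, hc] at f; omega
        · rw [Set.mem_union, Set.mem_singleton_iff] at hγ' hδ'
          rcases hγ' with hγ' | rfl <;> rcases hδ' with hδ' | rfl
          · exact Or.inr ⟨γ', hγ', δ', hδ', f1, f2⟩
          · simp only [idx, cnt] at f1 f2
            exact Or.inl ⟨γ', hγ', by omega, by omega⟩
          · simp only [idx, cnt] at f1 f2
            exact Or.inl ⟨δ', hδ', by omega, by omega⟩
          · simp only [idx, cnt] at f2; omega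
    · rw [Set.mem_union, Set.mem_singleton_iff] at hγ hδ
      rcases hγ with hγ | rfl <;> rcases hδ with hδ | rfl
      · exact Or.inr ⟨γ, hγ, δ, hδ, e1, e2⟩
      · -- δ = α in Γ∪{α}-bad pair; use second derivation
        rcases h2 with ⟨δ', hδ', f⟩ | ⟨γ', hγ', δ', hδ', f1, f2⟩
        · rw [Set.mem_union, Set.mem_singleton_iff] at hδ'
          rcases hδ' with hδ' | rfl
          · exact Or.inl ⟨δ', hδ', f⟩
          · simp only [idx, cnt] at f
            exact Or.inl ⟨γ, hγ, by omega, by omega⟩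
        · rw [Set.mem_union, Set.mem_singleton_iff] at hγ' hδ'
          rcases hγ' with hγ' | rfl <;> rcases hδ' with hδ' | rfl
          · exact Or.inr ⟨γ', hγ', δ', hδ', f1, f2⟩
          · simp only [idx, cnt] at f1 f2
            exact Or.inr ⟨γ', hγ', γ, hγ, by omega, by omega⟩
          · simp only [idx, cnt] at f1 f2
            exact Or.inr ⟨δ', hδ', γ, hγ, by omega, by omega⟩
          · simp only [idx, cnt] at f2; omega
      · -- γ = α
        rcases h2 with ⟨δ', hδ', f⟩ | ⟨γ', hγ', δ', hδ', f1, f2⟩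
        · rw [Set.mem_union, Set.mem_singleton_iff] at hδ'
          rcases hδ' with hδ' | rfl
          · exact Or.inl ⟨δ', hδ', f⟩
          · simp only [idx, cnt] at f
            exact Or.inl ⟨δ, hδ, by omega, by omega⟩
        · rw [Set.mem_union, Set.mem_singleton_iff] at hγ' hδ'
          rcases hγ' with hγ' | rfl <;> rcases hδ' with hδ' | rfl
          · exact Or.inr ⟨γ', hγ', δ', hδ', f1, f2⟩
          · simp only [idx, cnt] at f1 f2
            exact Or.inr ⟨γ', hγ', δ, hδ, by omega, by omega⟩
          · simp only [idx, cnt] at f1 f2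
            exact Or.inr ⟨δ', hδ', δ, hδ, by omega, by omega⟩
          · simp only [idx, cnt] at f2; omega
      · omega
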